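/- In a symmetric system, if a group X with a map t ↦ t^X from T to X satisfies the axioms of a T-reflection group that separates reflections and t^X ≠ 1 for all t (i.e. T is proper), then for all s, t ∈ T we have s.s = s, and s.t = t if and only if t.s = s. -/
import Mathlib


/-- A symmetric system: a set with a multiplication satisfying (S1) and (S2). -/
structure SymmetricSystem (T : Type*) where
  mul : T → T → T
  s1 : ∀ s t : T, mul s (mul s t) = t
  s2 : ∀ r s t : T, mul r (mul s t) = mul (mul r s) (mul r t)

/-- A `T`-reflection group: a group `X` acting on `T` together with a map `t ↦ t^X`
satisfying axioms (G1)-(G4). -/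
structure ReflectionGroup {T : Type*} (S : SymmetricSystem T) (X : Type*) [Group X] where
  act : X → T → T
  act_one : ∀ t : T, act 1 t = t
  act_mul : ∀ x y : X, ∀ t : T, act (x * y) t = act x (act y t)
  refl : T → X
  g1 : Subgroup.closure (Set.range refl) = ⊤
  g2 : ∀ s t : T, act (refl t) s = S.mul t s
  g3 : ∀ s t : T, refl t * refl s * (refl t)⁻¹ = refl (S.mul t s)
  g4 : ∀ t : T, refl t * refl t = 1

/-- If a symmetric system `T` has a reflection group that separates reflections and is
proper, then `s.s = s` and `s.t = t ↔ t.s = s` for all `s t ∈ T`. -/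
theorem properSymmetricSystem_idem_and_perp_symm
    {T : Type*} (S : SymmetricSystem T) {X : Type*} [Group X]
    (R : ReflectionGroup S X)
    (hsep : Function.Injective R.refl)
    (hproper : ∀ t : T, R.refl t ≠ 1) :
    ∀ s t : T, S.mul s s = s ∧ (S.mul s t = t ↔ S.mul t s = s) := by
  have hinv : ∀ t : T, (R.refl t)⁻¹ = R.refl t := fun t =>
    inv_eq_of_mul_eq_one_right (R.g4 t)
  have hcomm : ∀ s t : T, S.mul s t = t → S.mul t s = s := by
    intro s t h
    apply hsep
    rw [← R.g3 s t]
    have h1 : R.refl s * R.refl t * (R.refl s)⁻¹ = R.refl t := by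
      rw [R.g3, h]
    have h2 : R.refl s * R.refl t = R.refl t * R.refl s := by
      have := congrArg (· * R.refl s) h1
      simpa [mul_assoc, hinv, R.g4] using this
    rw [hinv, mul_assoc, h2, ← mul_assoc, R.g4, one_mul]
  intro s t
  refine ⟨?_, ⟨hcomm s t, hcomm t s⟩⟩
  apply hsep
  rw [← R.g3 s s]
  rw [R.g4, one_mul, hinv]
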